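/- Let d ≥ 3 and p > 0 with d - 2 - 2/p ≤ 0 (the critical or subcritical case, with d - 2 - 1/p > 0). Then there is no nontrivial C² solution h : [0,∞) → ℝ of h'' + (d - 2 - 2/p) h' - (1/p)(d - 2 - 1/p) h + h^{2p+1} = 0 with h(0) = 0, h(s), h'(s) → 0 as s → ∞, and h'(s)² integrable on [0,∞). Equivalently, every such solution satisfies h ≡ 0. -/

import Mathlib

open Real MeasureTheory

/-- Nonexistence of nontrivial finite-energy static solutions in the critical and
subcritical cases `d - 2 - 2/p ≤ 0`. -/
theorem stmt_2 (d p : ℝ) (hd : 3 ≤ d) (hp : 0 < p)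
    (hsub : d - 2 - 2 / p ≤ 0) (hpos : 0 < d - 2 - 1 / p)
    (h h' h'' : ℝ → ℝ)
    (hder1 : ∀ s ≥ (0:ℝ), HasDerivAt h (h' s) s)
    (hder2 : ∀ s ≥ (0:ℝ), HasDerivAt h' (h'' s) s)
    (hcont : ContinuousOn h'' (Set.Ici 0))
    (heq : ∀ s ≥ (0:ℝ),
      h'' s + (d - 2 - 2 / p) * h' s - (1 / p) * (d - 2 - 1 / p) * h s
        + |h s| ^ (2 * p) * h s = 0)
    (h0 : h 0 = 0)
    (hlim : Filter.Tendsto h Filter.atTop (nhds 0))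
    (hlim' : Filter.Tendsto h' Filter.atTop (nhds 0))
    (hint : IntegrableOn (fun s => h' s ^ 2) (Set.Ici 0)) :
    ∀ s ≥ (0:ℝ), h s = 0 := by
  have hp' : p ≠ 0 := hp.ne'
  have hp1 : (1:ℝ) ≤ p + 1 := by linarith
  have hp1' : p + 1 ≠ 0 := by positivity
  set E : ℝ → ℝ := fun t => h' t ^ 2 / 2 - (1/p) * (d-2-1/p) * h t ^ 2 / 2
      + (h t ^ 2) ^ (p+1) / (2*p+2) with hEdef
  -- derivative of the energy
  have hE : ∀ s ≥ (0:ℝ), HasDerivAt E (-(d - 2 - 2/p) * h' s ^ 2) s := by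
    intro s hs
    have key : ∀ x : ℝ, (x^2:ℝ) ^ p = |x| ^ (2*p) := by
      intro x
      rw [← sq_abs, ← Real.rpow_natCast |x| 2, ← Real.rpow_mul (abs_nonneg x)]
      norm_num
    have d1 := ((hder2 s hs).pow 2).div_const 2
    have d2 := ((((hder1 s hs).pow 2)).const_mul ((1/p) * (d-2-1/p))).div_const 2
    have d3 := (((hder1 s hs).pow 2).rpow_const (Or.inr hp1)).div_const (2*p+2)
    have D := (d1.sub d2).add d3
    rw [hEdef]
    convert D using 1
    · rfl
    · rfl
    · rfl
    have e1 : p + 1 - 1 = p := by ring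
    rw [e1, Pi.pow_apply, key (h s)]
    have heqs := heq s hs
    have h2p2 : (2*p+2) ≠ 0 := by positivity
    field_simp at heqs ⊢
    linear_combination (-2*(h' s)) * heqs
  have hEcont : ContinuousOn E (Set.Ici 0) :=
    fun t ht => (hE t ht).continuousAt.continuousWithinAt
  have hmono : MonotoneOn E (Set.Ici 0) := by
    apply monotoneOn_of_deriv_nonneg (convex_Ici 0) hEcont
    · intro x hx
      rw [interior_Ici] at hx
      exact (hE x (le_of_lt hx)).differentiableAt.differentiableWithinAt
    · intro x hx
      rw [interior_Ici] at hx
      rw [(hE x (le_of_lt hx)).deriv]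
      have h1 : (0:ℝ) ≤ -(d - 2 - 2/p) := by linarith
      exact mul_nonneg h1 (sq_nonneg _)
  -- the energy tends to 0 at infinity
  have hElim : Filter.Tendsto E Filter.atTop (nhds 0) := by
    have t1 : Filter.Tendsto (fun t => h' t ^ 2 / 2) Filter.atTop (nhds 0) := by
      have := (hlim'.pow 2).div_const 2
      simpa using this
    have t2 : Filter.Tendsto (fun t => (1/p) * (d-2-1/p) * h t ^ 2 / 2)
        Filter.atTop (nhds 0) := by
      have := ((hlim.pow 2).const_mul ((1/p) * (d-2-1/p))).div_const 2
      simpa using this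
    have t3 : Filter.Tendsto (fun t => (h t ^ 2) ^ (p+1) / (2*p+2))
        Filter.atTop (nhds 0) := by
      have hcont0 : ContinuousAt (fun x : ℝ => x ^ (p+1)) 0 :=
        Real.continuousAt_rpow_const 0 (p+1) (Or.inr (by linarith))
      have hl2 : Filter.Tendsto (fun t => h t ^ 2) Filter.atTop (nhds 0) := by
        simpa using hlim.pow 2
      have := (hcont0.tendsto.comp hl2).div_const (2*p+2)
      simpa [Function.comp, Real.zero_rpow hp1'] using this
    have := (t1.sub t2).add t3
    rw [hEdef]
    simpa using this
  -- monotone + tends to 0 ⇒ E ≤ 0 on [0,∞)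
  have hEle : ∀ s ≥ (0:ℝ), E s ≤ 0 := by
    intro s hs
    refine ge_of_tendsto hElim ?_
    filter_upwards [Filter.eventually_ge_atTop s] with t ht
    exact hmono (Set.mem_Ici.mpr hs) (Set.mem_Ici.mpr (le_trans hs ht)) ht
  -- hence h'(0) = 0
  have hE0 : E 0 = h' 0 ^ 2 / 2 := by
    rw [hEdef]
    simp [h0, Real.zero_rpow hp1']
  have h'0 : h' 0 = 0 := by
    have := hEle 0 le_rfl
    rw [hE0] at this
    nlinarith [sq_nonneg (h' 0)]
  -- Grönwall argument: (h, h') vanishes identically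
  intro s hs
  have hhcont : ContinuousOn (fun t => |h t| ^ (2*p)) (Set.Icc 0 s) := by
    have hc : ContinuousOn h (Set.Icc 0 s) :=
      fun t ht => (hder1 t ht.1).continuousAt.continuousWithinAt
    exact hc.abs.rpow_const (fun t ht => Or.inr (by positivity))
  obtain ⟨M, hM⟩ := isCompact_Icc.exists_bound_of_continuousOn hhcont
  have hM0 : 0 ≤ M := le_trans (norm_nonneg _) (hM 0 ⟨le_rfl, hs⟩)
  have ha0 : 0 < (1/p) * (d-2-1/p) := by positivity
  set K : ℝ := |d - 2 - 2/p| + (1/p) * (d-2-1/p) + M + 1 with hKdef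
  have hK1 : 1 ≤ K := by
    rw [hKdef]
    linarith [abs_nonneg (d - 2 - 2/p), ha0, hM0]
  set f : ℝ → ℝ × ℝ := fun t => (h t, h' t) with hfdef
  have hfc : ContinuousOn f (Set.Icc 0 s) := fun t ht =>
    ((hder1 t ht.1).continuousAt.continuousWithinAt).prodMk
      ((hder2 t ht.1).continuousAt.continuousWithinAt)
  have hf' : ∀ t ∈ Set.Ico 0 s, HasDerivWithinAt f ((h' t, h'' t)) (Set.Ici t) t :=
    fun t ht => ((hder1 t ht.1).prodMk (hder2 t ht.1)).hasDerivWithinAt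
  have bound : ∀ t ∈ Set.Ico 0 s, ‖(h' t, h'' t)‖ ≤ K * ‖f t‖ + 0 := by
    intro t ht
    rw [add_zero, hfdef, Prod.norm_def, Prod.norm_def]
    simp only [Real.norm_eq_abs]
    have hmax : 0 ≤ max |h t| |h' t| := le_max_of_le_left (abs_nonneg _)
    have h1 : |h' t| ≤ K * max |h t| |h' t| :=
      le_trans (le_max_right _ _) (le_mul_of_one_le_left hmax hK1)
    have hMt : |h t| ^ (2*p) ≤ M := by
      have := hM t ⟨ht.1, le_of_lt ht.2⟩
      rwa [Real.norm_eq_abs, abs_of_nonneg (Real.rpow_nonneg (abs_nonneg _) _)] at this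
    have h2 : |h'' t| ≤ K * max |h t| |h' t| := by
      have heqt := heq t ht.1
      have e : h'' t = -((d - 2 - 2/p) * h' t) + (1/p) * (d-2-1/p) * h t
          + -(|h t| ^ (2*p) * h t) := by linarith
      rw [e]
      refine (abs_add_three _ _ _).trans ?_
      have bA : |(-((d - 2 - 2/p) * h' t))| ≤ |d - 2 - 2/p| * max |h t| |h' t| := by
        rw [abs_neg, abs_mul]
        exact mul_le_mul_of_nonneg_left (le_max_right _ _) (abs_nonneg _)
      have bB : |(1/p) * (d-2-1/p) * h t| ≤ (1/p) * (d-2-1/p) * max |h t| |h' t| := by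
        rw [abs_mul, abs_of_pos ha0]
        exact mul_le_mul_of_nonneg_left (le_max_left _ _) (le_of_lt ha0)
      have bC : |(-(|h t| ^ (2*p) * h t))| ≤ M * max |h t| |h' t| := by
        rw [abs_neg, abs_mul, abs_of_nonneg (Real.rpow_nonneg (abs_nonneg _) _)]
        exact mul_le_mul hMt (le_max_left _ _) (abs_nonneg _) hM0
      nlinarith [bA, bB, bC, hmax, abs_nonneg (d - 2 - 2/p)]
    exact max_le h1 h2
  have ha : ‖f 0‖ ≤ 0 := by
    rw [hfdef]
    simp [Prod.norm_def, h0, h'0]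
  have key := norm_le_gronwallBound_of_norm_deriv_right_le hfc hf' ha bound s ⟨hs, le_rfl⟩
  rw [gronwallBound_ε0_δ0] at key
  have habs : |h s| ≤ 0 := by
    refine le_trans ?_ key
    rw [hfdef, Prod.norm_def]
    simp only [Real.norm_eq_abs]
    exact le_max_left _ _
  have := abs_nonneg (h s)
  have : |h s| = 0 := le_antisymm habs this
  exact abs_eq_zero.mp this
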